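/- Let T be a (1,2)-tensor field on a manifold such that T(Lξ,η) = T(ξ,Lη) for a gl-regular operator field L admitting a cyclic vector field ξ (so ξ, Lξ, ..., L^{n-1}ξ form a frame), and suppose the product ξ∘η = T(ξ,η) satisfies T(L^pξ, L^qξ) = R·L^{p+q}ξ where R is a polynomial in L with function coefficients. Then the operation ∘ is commutative and associative. -/

import Mathlib

/-- let T be a (1,2)-tensor field with T(Lξ,η) = T(ξ,Lη) for an
operator field L admitting a cyclic vector field ξ, and suppose
T(L^pξ, L^qξ) = R·L^{p+q}ξ with R a polynomial in L (with function
coefficients). Then the product u∘v = T(u,v) is commutative and associative. -/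
theorem symmetry_tensor_comm_assoc
    {E : Type*} [AddCommGroup E] [Module ℝ E] [FiniteDimensional ℝ E]
    (n : ℕ) (hn : Module.finrank ℝ E = n)
    (L : E → (E →ₗ[ℝ] E)) (T : E → (E →ₗ[ℝ] E →ₗ[ℝ] E)) (ξ : E → E)
    (hcyc : ∀ x, LinearIndependent ℝ (fun k : Fin n => ((L x) ^ (k : ℕ)) (ξ x)))
    (hsym : ∀ x u v, T x ((L x) u) v = T x u ((L x) v))
    (hR : ∀ x, ∃ p : Polynomial ℝ, ∀ i j : ℕ,
      T x (((L x) ^ i) (ξ x)) (((L x) ^ j) (ξ x))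
        = (Polynomial.aeval (L x) p) (((L x) ^ (i + j)) (ξ x))) :
    ∀ x u v w, T x u v = T x v u ∧ T x (T x u v) w = T x u (T x v w) := by
  intro x u v w
  obtain ⟨p, hp⟩ := hR x
  set ℓ := L x with hℓ
  set e := ξ x with he
  -- symmetry for powers of ℓ
  have symA : ∀ (m : ℕ) (a b : E), T x ((ℓ ^ m) a) b = T x a ((ℓ ^ m) b) := by
    intro m
    induction m with
    | zero => intro a b; simp
    | succ k ih =>
      intro a b
      have hc : (ℓ ^ k) (ℓ b) = ℓ ((ℓ ^ k) b) := by
        rw [← Module.End.mul_apply, ← Module.End.mul_apply, ← pow_succ, ← pow_succ']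
      rw [pow_succ']
      simp only [Module.End.mul_apply]
      rw [hsym, ih, hc]
  -- symmetry for polynomials in ℓ
  have symB : ∀ (q : Polynomial ℝ) (a b : E),
      T x ((Polynomial.aeval ℓ q) a) b = T x a ((Polynomial.aeval ℓ q) b) := by
    intro q
    induction q using Polynomial.induction_on' with
    | add f g hf hg =>
      intro a b
      simp only [map_add, LinearMap.add_apply, LinearMap.map_add]
      rw [hf, hg]
    | monomial m r =>
      intro a b
      simp only [Polynomial.aeval_monomial, Module.End.mul_apply,
        Module.algebraMap_end_apply, LinearMap.map_smul, LinearMap.smul_apply]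
      rw [symA]
  -- polynomials in ℓ commute with powers of ℓ
  have commPow : ∀ (q : Polynomial ℝ) (m : ℕ) (a : E),
      (Polynomial.aeval ℓ q) ((ℓ ^ m) a) = (ℓ ^ m) ((Polynomial.aeval ℓ q) a) := by
    intro q m a
    have hXm : ℓ ^ m = Polynomial.aeval ℓ ((Polynomial.X : Polynomial ℝ) ^ m) := by
      rw [map_pow, Polynomial.aeval_X]
    have h : Polynomial.aeval ℓ q * ℓ ^ m = ℓ ^ m * Polynomial.aeval ℓ q := by
      rw [hXm, ← map_mul, mul_comm, map_mul]
    have := DFunLike.congr_fun h a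
    simpa only [Module.End.mul_apply] using this
  -- the key computation lemma
  have lemC : ∀ (q : Polynomial ℝ) (a c : ℕ),
      T x ((ℓ ^ a) e) ((Polynomial.aeval ℓ q) ((ℓ ^ c) e))
        = (Polynomial.aeval ℓ q) ((Polynomial.aeval ℓ p) ((ℓ ^ (a + c)) e)) := by
    intro q
    induction q using Polynomial.induction_on' with
    | add f g hf hg =>
      intro a c
      simp only [map_add, LinearMap.add_apply, LinearMap.map_add]
      rw [hf, hg]
    | monomial m r =>
      intro a c
      simp only [Polynomial.aeval_monomial, Module.End.mul_apply,
        Module.algebraMap_end_apply, LinearMap.map_smul, LinearMap.smul_apply]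
      congr 1
      have h1 : (ℓ ^ m) ((ℓ ^ c) e) = (ℓ ^ (m + c)) e := by
        rw [pow_add, Module.End.mul_apply]
      have h2 : (ℓ ^ m) ((ℓ ^ (a + c)) e) = (ℓ ^ (m + (a + c))) e := by
        conv_rhs => rw [pow_add]
        rw [Module.End.mul_apply]
      rw [h1, hp a (m + c), ← commPow, h2, show a + (m + c) = m + (a + c) by omega]
  -- trivial case n = 0
  by_cases hn0 : n = 0
  · have hsub : Subsingleton E := by
      have : Module.finrank ℝ E = 0 := by rw [hn, hn0]
      exact Module.finrank_zero_iff.mp this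
    exact ⟨by rw [Subsingleton.elim u v],
      by rw [Subsingleton.elim ((T x) ((T x) u v) w) ((T x) u ((T x) v w))]⟩
  haveI : Nonempty (Fin n) := ⟨⟨0, Nat.pos_of_ne_zero hn0⟩⟩
  -- build the basis from the cyclic vector
  have hb : Fintype.card (Fin n) = Module.finrank ℝ E := by simp [hn]
  let b : Module.Basis (Fin n) ℝ E := basisOfLinearIndependentOfCardEqFinrank (hcyc x) hb
  have hbcoe : ∀ i : Fin n, b i = (ℓ ^ (i : ℕ)) e := by
    intro i
    simp [b, coe_basisOfLinearIndependentOfCardEqFinrank, hℓ, he]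
  constructor
  · -- commutativity
    have hcomm : T x = (T x).flip := by
      apply b.ext; intro i; apply b.ext; intro j
      rw [LinearMap.flip_apply, hbcoe, hbcoe, hp (i : ℕ) (j : ℕ), hp (j : ℕ) (i : ℕ),
        add_comm (i : ℕ) (j : ℕ)]
    conv_lhs => rw [hcomm]
    rfl
  · -- associativity
    have hassoc : (T x).compr₂ (T x)
        = ((LinearMap.llcomp ℝ E E E).comp (T x)).compl₂ (T x) := by
      apply b.ext; intro i; apply b.ext; intro j; apply b.ext; intro k
      simp only [LinearMap.compr₂_apply, LinearMap.compl₂_apply, LinearMap.llcomp_apply,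
        LinearMap.comp_apply, hbcoe]
      rw [hp (i : ℕ) (j : ℕ), hp (j : ℕ) (k : ℕ), symB, lemC, lemC, add_assoc]
    have := DFunLike.congr_fun (DFunLike.congr_fun (DFunLike.congr_fun hassoc u) v) w
    simpa only [LinearMap.compr₂_apply, LinearMap.compl₂_apply, LinearMap.llcomp_apply,
      LinearMap.comp_apply] using this
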